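/- arXiv:1601.06463 — 2 statements merged into one kernel-verified Lean document; each statement's English description precedes it below -/
import Mathlib

section
/- For every integer K ≥ 3 and every real α with 1/2 < α < K, the finite-precision GDoF per user is strictly smaller than the perfect-CSIT (W-curve) value: d_K(α) < d_2(α). Moreover d_K(α) = d_2(α) for α ∈ [0, 1/2]. -/
noncomputable def dK (K : ℕ) (α : ℝ) : ℝ :=
  if α ≤ 1/2 then 1 - α
  else if α ≤ (K : ℝ)/((K : ℝ)+1) then ((K : ℝ)-2-((K : ℝ)-3)*α)/((K : ℝ)-1)
  else if α ≤ 1 then 1 - (((K : ℝ)-1)/(K : ℝ))*α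
  else if α ≤ (K : ℝ) then α/(K : ℝ)
  else 1

lemma dK2_eq (α : ℝ) : dK 2 α =
    if α ≤ 1/2 then 1 - α
    else if α ≤ 2/3 then α
    else if α ≤ 1 then 1 - α/2
    else if α ≤ 2 then α/2
    else 1 := by
  simp only [dK]
  norm_num
  split_ifs <;> ring

theorem dK_lt_W_curve (K : ℕ) (hK : 3 ≤ K) :
    (∀ α : ℝ, 1/2 < α → α < (K : ℝ) → dK K α < dK 2 α) ∧
    (∀ α : ℝ, α ∈ Set.Icc (0 : ℝ) (1/2) → dK K α = dK 2 α) := by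
  have hk3 : (3:ℝ) ≤ (K:ℝ) := by exact_mod_cast hK
  constructor
  · intro α h1 h2
    have hα : ¬ α ≤ 1/2 := not_le.mpr h1
    rw [dK2_eq, dK]
    rw [if_neg hα, if_neg hα]
    have hk1 : (0:ℝ) < (K:ℝ) - 1 := by linarith
    by_cases hA : α ≤ (K:ℝ)/((K:ℝ)+1)
    · rw [if_pos hA]
      have hαlt1 : α < 1 := lt_of_le_of_lt hA (by rw [div_lt_one (by linarith)]; linarith)
      by_cases hB : α ≤ 2/3
      · rw [if_pos hB]
        rw [div_lt_iff₀ hk1]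
        nlinarith
      · rw [if_neg hB, if_pos hαlt1.le]
        rw [div_lt_iff₀ hk1]
        nlinarith
    · rw [if_neg hA]
      have hA' : (K:ℝ)/((K:ℝ)+1) < α := not_le.mp hA
      have h34 : (3:ℝ)/4 ≤ (K:ℝ)/((K:ℝ)+1) := by
        rw [div_le_div_iff₀ (by norm_num) (by linarith)]; linarith
      have hB : ¬ α ≤ 2/3 := by push_neg; linarith
      rw [if_neg hB]
      by_cases hC : α ≤ 1
      · rw [if_pos hC, if_pos hC]
        have : α/2 < ((K:ℝ)-1)/(K:ℝ)*α := by
          rw [div_mul_eq_mul_div, lt_div_iff₀ (by linarith)]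
          nlinarith
        linarith
      · rw [if_neg hC, if_neg hC, if_pos h2.le]
        push_neg at hC
        by_cases hD : α ≤ 2
        · rw [if_pos hD]
          rw [div_lt_div_iff₀ (by linarith) (by norm_num)]
          nlinarith
        · rw [if_neg hD]
          rw [div_lt_one (by linarith)]
          exact h2
  · intro α hα
    rw [dK2_eq, dK, if_pos hα.2, if_pos hα.2]
end

section
/- For fixed α with 1/2 < α and integers 2 ≤ K < K', if α < K then d_{K'}(α) < d_K(α); i.e., the per-user GDoF under finite precision CSIT is strictly decreasing in the number of users K for every α in (1/2, K). -/
theorem dK_strict_decreasing_in_K (α : ℝ) (hα : 1/2 < α) (K K' : ℕ)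
    (hK : 2 ≤ K) (hKK' : K < K') (hαK : α < (K : ℝ)) :
    dK K' α < dK K α := by
  have hk : (2:ℝ) ≤ (K:ℝ) := by exact_mod_cast hK
  have hkk : (K:ℝ) + 1 ≤ (K':ℝ) := by exact_mod_cast hKK'
  have h0 : ¬ α ≤ 1/2 := not_le.2 hα
  have hK1 : (0:ℝ) < (K:ℝ) - 1 := by linarith
  have hK'1 : (0:ℝ) < (K':ℝ) - 1 := by linarith
  have hKpos : (0:ℝ) < (K:ℝ) := by linarith
  have hK'pos : (0:ℝ) < (K':ℝ) := by linarith
  have hfrac : (K:ℝ)/((K:ℝ)+1) ≤ (K':ℝ)/((K':ℝ)+1) := by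
    rw [div_le_div_iff₀ (by linarith) (by linarith)]; nlinarith
  have hfrac1 : (K':ℝ)/((K':ℝ)+1) < 1 := by
    rw [div_lt_one (by linarith)]; linarith
  unfold dK
  rw [if_neg h0, if_neg h0]
  split_ifs with h1 h2 h3 h4 h5 h6 h7 h8 h9 h10 h11
  · -- both in regime 2
    rw [div_lt_div_iff₀ hK'1 hK1]
    nlinarith [mul_pos (by linarith : (0:ℝ) < 2*α - 1) (by linarith : (0:ℝ) < (K':ℝ) - (K:ℝ))]
  · -- K' regime 2, K regime 3
    have hα1 : α < 1 := lt_of_le_of_lt h1 hfrac1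
    have hrw : 1 - ((K:ℝ)-1)/(K:ℝ)*α = ((K:ℝ) - ((K:ℝ)-1)*α)/(K:ℝ) := by
      field_simp
    rw [hrw, div_lt_div_iff₀ hK'1 hKpos]
    nlinarith [mul_le_mul_of_nonneg_left (by linarith : (K:ℝ) ≤ (K':ℝ) - 1) (by linarith : (0:ℝ) ≤ α),
      mul_pos (by linarith : (0:ℝ) < 1 - α) hKpos]
  · exact absurd (le_of_lt (lt_of_le_of_lt h1 hfrac1)) h3
  · exact absurd (le_of_lt (lt_of_le_of_lt h1 hfrac1)) h3
  · exact absurd (h6.trans hfrac) h1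
  · -- both regime 3
    have : ((K:ℝ)-1)/(K:ℝ) * α < ((K':ℝ)-1)/(K':ℝ) * α := by
      apply mul_lt_mul_of_pos_right _ (by linarith)
      rw [div_lt_div_iff₀ hKpos hK'pos]; nlinarith
    linarith
  · exact absurd (h8.trans (le_of_lt (lt_of_le_of_lt hfrac hfrac1))) h5
  · -- both regime 4
    exact div_lt_div_of_pos_left (by push_neg at h5; linarith) hKpos (by linarith)
  · exact absurd (le_of_lt (lt_of_lt_of_le hαK (by linarith))) h9
  · exact absurd (le_of_lt (lt_of_lt_of_le hαK (by linarith))) h7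
  · exact absurd (le_of_lt (lt_of_lt_of_le hαK (by linarith))) h7
  · exact absurd (le_of_lt hαK) h11
end
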